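/- For β > 0, the function F(x) = exp(-β/x) for x > 0 (and F(x) = 0 for x ≤ 0) is a cumulative distribution function, and its Laplace-type transform satisfies ∫_0^∞ e^{-λx} dF(x) = 2√(λβ) · K₁(2√(λβ)) for all λ > 0, where K₁ is the modified Bessel function of the second kind of order 1. -/

import Mathlib

open MeasureTheory Filter

open scoped NNReal ENNReal

noncomputable section

/-- The modified Bessel function of the second kind of order 1, via the integral
representation `K₁(z) = (z/4)∫₀^∞ t⁻² exp(-t - z²/(4t)) dt`. -/
def besselK1 (z : ℝ) : ℝ :=
  (z / 4) * ∫ t in Set.Ioi (0 : ℝ), t ^ (-2 : ℝ) * Real.exp (-t - z ^ 2 / (4 * t))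

section Aux

variable {β : ℝ}


lemma gm_zero (hβ : 0 < β) (F : ℝ → ℝ)
    (hF : ∀ x : ℝ, F x = if 0 < x then Real.exp (-β / x) else 0) :
    ∀ x : ℝ, x ≤ 0 → F x = 0 := fun x hx => by
  rw [hF]; exact if_neg (not_lt.2 hx)

lemma gm_pos (F : ℝ → ℝ)
    (hF : ∀ x : ℝ, F x = if 0 < x then Real.exp (-β / x) else 0) :
    ∀ x : ℝ, 0 < x → F x = Real.exp (-β / x) := fun x hx => by
  rw [hF]; exact if_pos hx

lemma gm_mono (hβ : 0 < β) (F : ℝ → ℝ)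
    (hF : ∀ x : ℝ, F x = if 0 < x then Real.exp (-β / x) else 0) :
    Monotone F := by
  intro x y hxy
  rcases le_or_gt y 0 with hy | hy
  · rw [gm_zero hβ F hF x (hxy.trans hy), gm_zero hβ F hF y hy]
  rcases le_or_gt x 0 with hx | hx
  · rw [gm_zero hβ F hF x hx, gm_pos F hF y hy]; positivity
  · rw [gm_pos F hF x hx, gm_pos F hF y hy]
    apply Real.exp_le_exp.2
    rw [neg_div, neg_div, neg_le_neg_iff]
    gcongr

lemma gm_lim0 (hβ : 0 < β) (F : ℝ → ℝ)
    (hF : ∀ x : ℝ, F x = if 0 < x then Real.exp (-β / x) else 0) :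
    Tendsto F (nhdsWithin 0 (Set.Ioi 0)) (nhds 0) := by
  have h2 : Tendsto (fun y : ℝ => β * y⁻¹) (nhdsWithin 0 (Set.Ioi 0)) atTop :=
    tendsto_inv_nhdsGT_zero.const_mul_atTop hβ
  have h1 : Tendsto (fun y : ℝ => -β / y) (nhdsWithin 0 (Set.Ioi 0)) atBot := by
    have := tendsto_neg_atTop_atBot.comp h2
    refine this.congr fun y => ?_
    simp [div_eq_mul_inv]
  have h3 := Real.tendsto_exp_atBot.comp h1
  refine h3.congr' ?_
  filter_upwards [self_mem_nhdsWithin] with y hy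
  exact (gm_pos F hF y hy).symm

lemma gm_rc (hβ : 0 < β) (F : ℝ → ℝ)
    (hF : ∀ x : ℝ, F x = if 0 < x then Real.exp (-β / x) else 0) :
    ∀ x : ℝ, ContinuousWithinAt F (Set.Ici x) x := by
  intro x
  rcases lt_trichotomy x 0 with hx | rfl | hx
  · apply ContinuousAt.continuousWithinAt
    have hev : (fun _ : ℝ => (0:ℝ)) =ᶠ[nhds x] F := by
      filter_upwards [Iio_mem_nhds hx] with y hy
      exact (gm_zero hβ F hF y hy.le).symm
    exact continuousAt_const.congr hev
  · rw [← continuousWithinAt_Ioi_iff_Ici]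
    have : F 0 = 0 := gm_zero hβ F hF 0 le_rfl
    unfold ContinuousWithinAt
    rw [this]
    exact gm_lim0 hβ F hF
  · apply ContinuousAt.continuousWithinAt
    have hev : (fun y : ℝ => Real.exp (-β / y)) =ᶠ[nhds x] F := by
      filter_upwards [Ioi_mem_nhds hx] with y hy
      exact (gm_pos F hF y hy).symm
    have hc : ContinuousAt (fun y : ℝ => -β / y) x :=
      ContinuousAt.div continuousAt_const continuousAt_id hx.ne'
    exact (Real.continuous_exp.continuousAt.comp hc).congr hev

lemma gm_bot (hβ : 0 < β) (F : ℝ → ℝ)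
    (hF : ∀ x : ℝ, F x = if 0 < x then Real.exp (-β / x) else 0) :
    Tendsto F atBot (nhds 0) := by
  refine tendsto_const_nhds.congr' ?_
  filter_upwards [eventually_le_atBot 0] with y hy
  exact (gm_zero hβ F hF y hy).symm

lemma gm_top (hβ : 0 < β) (F : ℝ → ℝ)
    (hF : ∀ x : ℝ, F x = if 0 < x then Real.exp (-β / x) else 0) :
    Tendsto F atTop (nhds 1) := by
  have h1 : Tendsto (fun y : ℝ => -β / y) atTop (nhds 0) := by
    have h2 := tendsto_inv_atTop_zero (𝕜 := ℝ) |>.const_mul (-β)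
    simpa [div_eq_mul_inv] using h2
  have h3 : Tendsto (fun y : ℝ => Real.exp (-β / y)) atTop (nhds 1) := by
    have := Real.continuous_exp.continuousAt (x := (0:ℝ)) |>.tendsto.comp h1
    simpa [Function.comp_def] using this
  refine h3.congr' ?_
  filter_upwards [eventually_gt_atTop 0] with y hy
  exact (gm_pos F hF y hy).symm


lemma gm_deriv (hβ : 0 < β) (F : ℝ → ℝ)
    (hF : ∀ x : ℝ, F x = if 0 < x then Real.exp (-β / x) else 0)
    {x : ℝ} (hx : 0 < x) :
    HasDerivAt F (β / x ^ 2 * Real.exp (-β / x)) x := by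
  have h1 : HasDerivAt (fun y : ℝ => -β / y) (β / x ^ 2) x := by
    have h := (hasDerivAt_inv hx.ne').const_mul (-β)
    rw [neg_mul_neg] at h
    simpa only [div_eq_mul_inv] using h
  have h2 := h1.exp
  have h3 : HasDerivAt F (Real.exp (-β / x) * (β / x ^ 2)) x := by
    apply h2.congr_of_eventuallyEq
    filter_upwards [Ioi_mem_nhds hx] with y hy
    rw [hF]; exact if_pos hy
  convert h3 using 1; ring

lemma gm_contOn (hβ : 0 < β) {s : Set ℝ} (hs : s ⊆ Set.Ioi 0) :
    ContinuousOn (fun x : ℝ => β / x ^ 2 * Real.exp (-β / x)) s := by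
  apply ContinuousOn.mul
  · exact continuousOn_const.div ((continuous_pow 2).continuousOn)
      fun y hy => pow_ne_zero 2 (hs hy).ne'
  · exact Real.continuous_exp.comp_continuousOn
      (continuousOn_const.div continuousOn_id fun y hy => (hs hy).ne')


lemma gm_d_meas (hβ : 0 < β) :
    Measurable (fun x : ℝ => Real.toNNReal (if 0 < x then β / x ^ 2 * Real.exp (-β / x) else 0)) := by
  apply Measurable.real_toNNReal
  have h : (fun x : ℝ => if 0 < x then β / x ^ 2 * Real.exp (-β / x) else 0)
      = Set.indicator (Set.Ioi 0) (fun x : ℝ => β / x ^ 2 * Real.exp (-β / x)) := by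
    funext x; simp [Set.indicator, Set.mem_Ioi]
  rw [h]
  exact Measurable.indicator (by fun_prop) measurableSet_Ioi

lemma gm_FTC (hβ : 0 < β) (F : ℝ → ℝ)
    (hF : ∀ x : ℝ, F x = if 0 < x then Real.exp (-β / x) else 0)
    {a b : ℝ} (ha : 0 < a) (hab : a ≤ b) :
    (volume.withDensity fun x =>
        ((Real.toNNReal (if 0 < x then β / x ^ 2 * Real.exp (-β / x) else 0) : ℝ≥0) : ℝ≥0∞))
      (Set.Ioc a b) = ENNReal.ofReal (F b - F a) := by
  have hsub : Set.uIcc a b ⊆ Set.Ioi 0 := by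
    rw [Set.uIcc_of_le hab]; exact fun y hy => lt_of_lt_of_le ha hy.1
  have hint : IntervalIntegrable (fun x : ℝ => β / x ^ 2 * Real.exp (-β / x)) volume a b :=
    (gm_contOn hβ hsub).intervalIntegrable
  have hFTC1 : ∫ x in a..b, β / x ^ 2 * Real.exp (-β / x) = F b - F a :=
    intervalIntegral.integral_eq_sub_of_hasDerivAt
      (fun x hx => gm_deriv hβ F hF (hsub hx)) hint
  rw [withDensity_apply _ measurableSet_Ioc]
  have h2 : ∫⁻ x in Set.Ioc a b,
      ((Real.toNNReal (if 0 < x then β / x ^ 2 * Real.exp (-β / x) else 0) : ℝ≥0) : ℝ≥0∞)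
      = ∫⁻ x in Set.Ioc a b, ENNReal.ofReal (β / x ^ 2 * Real.exp (-β / x)) := by
    apply setLIntegral_congr_fun measurableSet_Ioc
    intro x hx
    beta_reduce
    rw [if_pos (ha.trans_le hx.1.le)]
    rfl
  rw [h2, ← ofReal_integral_eq_lintegral_ofReal]
  · rw [← intervalIntegral.integral_of_le hab, hFTC1]
  · exact (intervalIntegrable_iff_integrableOn_Ioc_of_le hab).mp hint
  · apply ae_of_all; intro x; positivity

lemma gm_Ioc0 (hβ : 0 < β) (F : ℝ → ℝ)
    (hF : ∀ x : ℝ, F x = if 0 < x then Real.exp (-β / x) else 0)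
    {b : ℝ} (hb : 0 < b) :
    (volume.withDensity fun x =>
        ((Real.toNNReal (if 0 < x then β / x ^ 2 * Real.exp (-β / x) else 0) : ℝ≥0) : ℝ≥0∞))
      (Set.Ioc 0 b) = ENNReal.ofReal (F b) := by
  set μ := (volume.withDensity fun x =>
        ((Real.toNNReal (if 0 < x then β / x ^ 2 * Real.exp (-β / x) else 0) : ℝ≥0) : ℝ≥0∞)) with hμ
  have hmon : Monotone (fun n : ℕ => Set.Ioc (b / (n + 1)) b) := by
    intro m n hmn
    apply Set.Ioc_subset_Ioc_left
    gcongr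
    all_goals first | exact hb.le | exact_mod_cast Nat.succ_le_succ hmn
  have hunion : (⋃ n : ℕ, Set.Ioc (b / (n + 1)) b) = Set.Ioc 0 b := by
    ext x
    simp only [Set.mem_iUnion, Set.mem_Ioc]
    constructor
    · rintro ⟨n, h1, h2⟩
      have h0 : (0:ℝ) < b / (n + 1) := by positivity
      exact ⟨h0.trans h1, h2⟩
    · rintro ⟨h1, h2⟩
      obtain ⟨n, hn⟩ := exists_nat_gt (b / x)
      refine ⟨n, ?_, h2⟩
      rw [div_lt_iff₀ (by positivity)]
      calc b = b / x * x := by field_simp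
        _ < (n + 1) * x := by
            apply mul_lt_mul_of_pos_right _ h1
            exact hn.trans (by linarith)
        _ = x * (n + 1) := mul_comm _ _
  have htends := tendsto_measure_iUnion_atTop (μ := μ) hmon
  rw [hunion] at htends
  have heq : ∀ n : ℕ, μ (Set.Ioc (b / (n + 1)) b) = ENNReal.ofReal (F b - F (b / (n + 1))) :=
    fun n => gm_FTC hβ F hF (by positivity)
      (div_le_self hb.le (by exact_mod_cast Nat.one_le_iff_ne_zero.mpr (Nat.succ_ne_zero n)))
  have hseq : Tendsto (fun n : ℕ => (b / (n + 1) : ℝ)) atTop (nhdsWithin 0 (Set.Ioi 0)) := by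
    rw [tendsto_nhdsWithin_iff]
    constructor
    · have h0 : Tendsto (fun n : ℕ => (1 / (n + 1) : ℝ)) atTop (nhds 0) :=
        tendsto_one_div_add_atTop_nhds_zero_nat
      have := h0.const_mul b
      simpa [div_eq_mul_inv, mul_comm] using this
    · exact Eventually.of_forall fun n => by simp only [Set.mem_Ioi]; positivity
  have hFb : Tendsto (fun n : ℕ => F (b / (n + 1))) atTop (nhds 0) :=
    (gm_lim0 hβ F hF).comp hseq
  have htends2 : Tendsto (fun n : ℕ => ENNReal.ofReal (F b - F (b / (n + 1)))) atTop
      (nhds (ENNReal.ofReal (F b))) := by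
    have h4 : Tendsto (fun n : ℕ => F b - F (b / (n + 1))) atTop (nhds (F b - 0)) :=
      tendsto_const_nhds.sub hFb
    rw [sub_zero] at h4
    exact (ENNReal.continuous_ofReal.tendsto _).comp h4
  have h5 : Tendsto (fun n : ℕ => μ (Set.Ioc (b / (n + 1)) b)) atTop
      (nhds (ENNReal.ofReal (F b))) := htends2.congr fun n => (heq n).symm
  exact tendsto_nhds_unique htends h5


lemma gm_zeroIoc (hβ : 0 < β) {a b : ℝ} (hb : b ≤ 0) :
    (volume.withDensity fun x =>
        ((Real.toNNReal (if 0 < x then β / x ^ 2 * Real.exp (-β / x) else 0) : ℝ≥0) : ℝ≥0∞))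
      (Set.Ioc a b) = 0 := by
  rw [withDensity_apply _ measurableSet_Ioc]
  rw [setLIntegral_congr_fun measurableSet_Ioc
    (fun ⦃x⦄ (hx : x ∈ Set.Ioc a b) => ?_), lintegral_zero]
  rw [if_neg (by push_neg; exact hx.2.trans hb)]
  simp

lemma gm_measure_eq (hβ : 0 < β) (F : ℝ → ℝ)
    (hF : ∀ x : ℝ, F x = if 0 < x then Real.exp (-β / x) else 0)
    (S : StieltjesFunction ℝ) (hS : ∀ x, S x = F x) :
    S.measure = (volume.withDensity fun x =>
        ((Real.toNNReal (if 0 < x then β / x ^ 2 * Real.exp (-β / x) else 0) : ℝ≥0) : ℝ≥0∞)) := by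
  set μ := (volume.withDensity fun x =>
        ((Real.toNNReal (if 0 < x then β / x ^ 2 * Real.exp (-β / x) else 0) : ℝ≥0) : ℝ≥0∞)) with hμ
  have hF0 : ∀ x : ℝ, x ≤ 0 → F x = 0 := fun x hx => by
    rw [hF]; exact if_neg (not_lt.2 hx)
  apply Measure.ext_of_Ioc
  intro a b hab
  rw [S.measure_Ioc, hS, hS]
  rcases le_or_gt b 0 with hb | hb
  · rw [gm_zeroIoc hβ hb, hF0 b hb, hF0 a (hab.le.trans hb)]
    simp
  rcases le_or_gt a 0 with ha | ha
  · have hsplit : Set.Ioc a 0 ∪ Set.Ioc 0 b = Set.Ioc a b := Set.Ioc_union_Ioc_eq_Ioc ha hb.le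
    have hdisj : Disjoint (Set.Ioc a 0) (Set.Ioc 0 b) := by
      rw [Set.disjoint_left]
      rintro x ⟨_, hx0⟩ ⟨hx0', _⟩
      exact absurd hx0' (not_lt.2 hx0)
    rw [← hsplit, measure_union hdisj measurableSet_Ioc, gm_zeroIoc hβ le_rfl,
      gm_Ioc0 hβ F hF hb, hF0 a ha, zero_add, sub_zero]
  · exact (gm_FTC hβ F hF ha hab.le).symm


lemma gm_integral (hβ : 0 < β) {lam : ℝ} (hlam : 0 < lam) :
    ∫ x, Real.exp (-lam * x) ∂(volume.withDensity fun x =>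
        ((Real.toNNReal (if 0 < x then β / x ^ 2 * Real.exp (-β / x) else 0) : ℝ≥0) : ℝ≥0∞))
      = 2 * Real.sqrt (lam * β) * besselK1 (2 * Real.sqrt (lam * β)) := by
  set J := ∫ x in Set.Ioi (0:ℝ), (x ^ 2)⁻¹ * (Real.exp (-β / x) * Real.exp (-lam * x)) with hJ
  -- LHS = β * J
  have hLHS : ∫ x, Real.exp (-lam * x) ∂(volume.withDensity fun x =>
        ((Real.toNNReal (if 0 < x then β / x ^ 2 * Real.exp (-β / x) else 0) : ℝ≥0) : ℝ≥0∞))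
      = β * J := by
    rw [integral_withDensity_eq_integral_smul (gm_d_meas hβ)]
    have hstep : ∀ x : ℝ,
        (Real.toNNReal (if 0 < x then β / x ^ 2 * Real.exp (-β / x) else 0)) • Real.exp (-lam * x)
        = Set.indicator (Set.Ioi 0)
            (fun x => β * ((x ^ 2)⁻¹ * (Real.exp (-β / x) * Real.exp (-lam * x)))) x := by
      intro x
      rw [NNReal.smul_def, smul_eq_mul]
      by_cases hx : x ∈ Set.Ioi (0:ℝ)
      · rw [Set.indicator_of_mem hx]
        have hx' : (0:ℝ) < x := hx
        rw [if_pos hx', Real.coe_toNNReal _ (by positivity)]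
        field_simp
      · rw [Set.indicator_of_notMem hx, if_neg (by simpa using hx)]
        simp
    rw [integral_congr_ae (ae_of_all _ hstep), integral_indicator measurableSet_Ioi,
      integral_const_mul]
  rw [hLHS]
  -- RHS
  set s := Real.sqrt (lam * β) with hs
  have hs2 : s ^ 2 = lam * β := Real.sq_sqrt (by positivity)
  have hspos : 0 < s := Real.sqrt_pos.mpr (by positivity)
  rw [besselK1]
  -- rewrite the bessel integrand on Ioi 0
  have hI1 : ∫ t in Set.Ioi (0:ℝ), t ^ (-2 : ℝ) * Real.exp (-t - (2*s) ^ 2 / (4 * t))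
      = ∫ t in Set.Ioi (0:ℝ), (t ^ 2)⁻¹ * Real.exp (-t - (lam * β) / t) := by
    apply setIntegral_congr_fun measurableSet_Ioi
    intro t ht
    have ht' : (0:ℝ) < t := ht
    show t ^ (-2:ℝ) * Real.exp (-t - (2*s)^2/(4*t)) = (t^2)⁻¹ * Real.exp (-t - lam*β/t)
    have he : (2*s)^2/(4*t) = lam*β/t := by
      rw [mul_pow, hs2, show (2:ℝ)^2 = 4 by norm_num,
        mul_div_mul_left _ _ (by norm_num : (4:ℝ) ≠ 0)]
    rw [he, Real.rpow_neg ht'.le, Real.rpow_two]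
  have hsub := integral_comp_mul_left_Ioi
    (fun t => (t ^ 2)⁻¹ * Real.exp (-t - (lam * β) / t)) 0 hlam
  rw [mul_zero] at hsub
  -- hsub : ∫ x in Ioi 0, ((lam*x)^2)⁻¹ * exp (-(lam*x) - lam*β/(lam*x)) = lam⁻¹ • ∫ ...
  have hcongr2 : ∫ x in Set.Ioi (0:ℝ), ((lam * x) ^ 2)⁻¹ * Real.exp (-(lam * x) - (lam * β) / (lam * x))
      = (lam ^ 2)⁻¹ * J := by
    rw [hJ, ← integral_const_mul]
    apply setIntegral_congr_fun measurableSet_Ioi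
    intro x hx
    have hx' : (0:ℝ) < x := hx
    show ((lam * x) ^ 2)⁻¹ * Real.exp (-(lam * x) - lam * β / (lam * x))
        = (lam ^ 2)⁻¹ * ((x ^ 2)⁻¹ * (Real.exp (-β / x) * Real.exp (-lam * x)))
    rw [mul_div_mul_left β x hlam.ne']
    rw [show -(lam * x) - β / x = -β / x + -lam * x by ring, Real.exp_add, mul_pow,
      mul_inv, mul_assoc]
  rw [hcongr2, smul_eq_mul] at hsub
  beta_reduce at hsub
  have hIb : (∫ t in Set.Ioi (0:ℝ), (t ^ 2)⁻¹ * Real.exp (-t - lam * β / t))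
      = lam * ((lam ^ 2)⁻¹ * J) := by
    rw [hsub, ← mul_assoc, mul_inv_cancel₀ hlam.ne', one_mul]
  have hlaminv : lam * (lam ^ 2)⁻¹ = lam⁻¹ := by
    rw [pow_two, mul_inv, ← mul_assoc, mul_inv_cancel₀ hlam.ne', one_mul]
  rw [hI1, hIb]
  calc β * J = s ^ 2 * lam⁻¹ * J := by
        rw [hs2]; field_simp
    _ = 2 * s * (2 * s / 4 * (lam * ((lam ^ 2)⁻¹ * J))) := by
        rw [show 2 * s * (2 * s / 4 * (lam * ((lam ^ 2)⁻¹ * J)))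
            = s ^ 2 * (lam * (lam ^ 2)⁻¹) * J by ring, hlaminv]

end Aux

/-- **(Diagonal distribution conjecture, analytic part.)**  For `β > 0` the function
`F(x) = exp(-β/x)` for `x > 0` (and `0` for `x ≤ 0`) is a cumulative distribution
function, and its Laplace–Stieltjes transform satisfies
`∫₀^∞ e^{-λx} dF(x) = 2√(λβ) K₁(2√(λβ))` for all `λ > 0`. -/
theorem inverse_gamma_cdf_laplace_transform
    (β : ℝ) (hβ : 0 < β) (F : ℝ → ℝ)
    (hF : ∀ x : ℝ, F x = if 0 < x then Real.exp (-β / x) else 0) :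
    Monotone F ∧
    (∀ x : ℝ, ContinuousWithinAt F (Set.Ici x) x) ∧
    Tendsto F atBot (nhds 0) ∧
    Tendsto F atTop (nhds 1) ∧
    ∀ S : StieltjesFunction ℝ, (∀ x, S x = F x) →
      ∀ lam : ℝ, 0 < lam →
        ∫ x, Real.exp (-lam * x) ∂S.measure
          = 2 * Real.sqrt (lam * β) * besselK1 (2 * Real.sqrt (lam * β)) := by
  refine ⟨gm_mono hβ F hF, gm_rc hβ F hF, gm_bot hβ F hF, gm_top hβ F hF, ?_⟩
  intro S hS lam hlam
  rw [gm_measure_eq hβ F hF S hS]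
  exact gm_integral hβ hlam

end
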